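/- arXiv:2605.23256 — 3 statements merged into one kernel-verified Lean document; each statement's English description precedes it below -/
import Mathlib

section
/- Let α > 0 and let T be a compact linear operator on the Hilbert space PH²_α. Then the Berezin transform of T vanishes at infinity: T̃(z) = ⟨T k_{ph,α}(·,z), k_{ph,α}(·,z)⟩ → 0 as |z| → ∞. -/
open MeasureTheory Metric Complex Filter
open scoped ENNReal Real

noncomputable instance (n : ℕ) : MeasurableSpace (EuclideanSpace ℂ (Fin n)) := borel _
instance (n : ℕ) : BorelSpace (EuclideanSpace ℂ (Fin n)) := ⟨rfl⟩

def Pluriharmonic {n : ℕ} (f : EuclideanSpace ℂ (Fin n) → ℂ) : Prop :=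
  ∃ g h : EuclideanSpace ℂ (Fin n) → ℂ, Differentiable ℂ g ∧ Differentiable ℂ h ∧
    ∀ z, f z = g z + (starRingEnd ℂ) (h z)

/-- The Gaussian measure `γ_α = (απ)^{-n} e^{-|z|²/α} dA(z)` on `ℂⁿ`. -/
noncomputable def gaussianFock (n : ℕ) (α : ℝ) : Measure (EuclideanSpace ℂ (Fin n)) :=
  volume.withDensity fun z => ENNReal.ofReal (Real.exp (-‖z‖ ^ 2 / α) / (α * π) ^ n)

lemma Pluriharmonic.zero {n : ℕ} : Pluriharmonic (0 : EuclideanSpace ℂ (Fin n) → ℂ) :=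
  ⟨0, 0, differentiable_const 0, differentiable_const 0, by simp⟩

lemma Pluriharmonic.add {n : ℕ} {f₁ f₂ : EuclideanSpace ℂ (Fin n) → ℂ}
    (h₁ : Pluriharmonic f₁) (h₂ : Pluriharmonic f₂) : Pluriharmonic (f₁ + f₂) := by
  obtain ⟨g₁, k₁, dg₁, dk₁, e₁⟩ := h₁
  obtain ⟨g₂, k₂, dg₂, dk₂, e₂⟩ := h₂
  exact ⟨g₁ + g₂, k₁ + k₂, dg₁.add dg₂, dk₁.add dk₂, fun z => by
    simp [e₁ z, e₂ z, map_add]; ring⟩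

lemma Pluriharmonic.smul {n : ℕ} (c : ℂ) {f : EuclideanSpace ℂ (Fin n) → ℂ}
    (hf : Pluriharmonic f) : Pluriharmonic (c • f) := by
  obtain ⟨g, k, dg, dk, e⟩ := hf
  refine ⟨c • g, (starRingEnd ℂ c) • k, dg.const_smul c, ?_, fun z => ?_⟩
  · simpa [Pi.smul_def] using dk.const_smul ((starRingEnd ℂ) c)
  · simp [e z, map_mul, Complex.conj_conj]
    ring

/-- `PH²_α`: the subspace of `L²(γ_α)` of (classes of) pluriharmonic functions. -/
noncomputable def PHsub (n : ℕ) (α : ℝ) : Submodule ℂ (Lp ℂ 2 (gaussianFock n α)) where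
  carrier := {f | ∃ g, Pluriharmonic g ∧ ⇑f =ᵐ[gaussianFock n α] g}
  zero_mem' := ⟨0, Pluriharmonic.zero, Lp.coeFn_zero ℂ 2 (gaussianFock n α)⟩
  add_mem' := by
    rintro a b ⟨ga, hga, ea⟩ ⟨gb, hgb, eb⟩
    exact ⟨ga + gb, hga.add hgb, (Lp.coeFn_add a b).trans (ea.add eb)⟩
  smul_mem' := by
    rintro c a ⟨ga, hga, ea⟩
    exact ⟨c • ga, hga.smul c, (Lp.coeFn_smul c a).trans (ea.const_smul c)⟩

/-- The pluriharmonic Fock kernel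
`K_{ph,α}(z,w) = exp(⟨z,w⟩/α) + exp(⟨w,z⟩/α) − 1`, `⟨z,w⟩ = ∑ z_j conj w_j`. -/
noncomputable def Kph (n : ℕ) (α : ℝ) (z w : EuclideanSpace ℂ (Fin n)) : ℂ :=
  Complex.exp ((∑ j, z j * (starRingEnd ℂ) (w j)) / (α : ℂ)) +
    Complex.exp ((∑ j, w j * (starRingEnd ℂ) (z j)) / (α : ℂ)) - 1

/- ========= auxiliary lemmas ========= -/
open scoped NNReal

lemma gauss1D_integrable {α : ℝ} (hα : 0 < α) (β : ℝ) :
    Integrable (fun x : ℝ => Real.exp (β * x - x ^ 2 / α)) := by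
  have h := integrable_cexp_quadratic (b := (1/α : ℂ)) (by simp [one_div]; positivity) (β : ℂ) 0
  have h2 := h.re
  refine h2.congr (Filter.Eventually.of_forall fun x => ?_)
  show RCLike.re (cexp (-(1/α : ℂ) * (x:ℂ) ^ 2 + (β : ℂ) * (x:ℂ) + 0)) = Real.exp (β * x - x ^ 2 / α)
  have e : (-(1/α : ℂ) * (x:ℂ) ^ 2 + (β : ℂ) * (x:ℂ) + 0) = ((β * x - x ^ 2 / α : ℝ) : ℂ) := by
    push_cast; ring
  rw [e]
  exact Complex.exp_ofReal_re _

lemma gauss1D {α : ℝ} (hα : 0 < α) (β : ℝ) :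
    ∫ x : ℝ, Real.exp (β * x - x ^ 2 / α) = Real.sqrt (α * π) * Real.exp (β ^ 2 * α / 4) := by
  have h := integral_cexp_quadratic (b := -(1/α : ℂ)) (by simp [one_div]; positivity) (β : ℂ) 0
  have hπα : (0:ℝ) ≤ α * π := by positivity
  have h' : ∫ x : ℝ, ((Real.exp (β * x - x ^ 2 / α) : ℝ) : ℂ)
      = ((Real.sqrt (α * π) * Real.exp (β ^ 2 * α / 4) : ℝ) : ℂ) := by
    calc ∫ x : ℝ, ((Real.exp (β * x - x ^ 2 / α) : ℝ) : ℂ)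
        = ∫ x : ℝ, cexp (-(1/α : ℂ) * (x:ℂ) ^ 2 + (β : ℂ) * (x:ℂ) + 0) := by
          congr 1; funext x
          have e : (-(1/α : ℂ) * (x:ℂ) ^ 2 + (β : ℂ) * (x:ℂ) + 0)
              = ((β * x - x ^ 2 / α : ℝ) : ℂ) := by push_cast; ring
          rw [e, ← Complex.ofReal_exp]
      _ = ((π:ℂ) / - -(1/α : ℂ)) ^ (1/2 : ℂ) * cexp (0 - (β:ℂ)^2 / (4 * -(1/α : ℂ))) := h
      _ = ((Real.sqrt (α * π) * Real.exp (β ^ 2 * α / 4) : ℝ) : ℂ) := by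
          have h1 : ((π : ℂ) / - -(1/α : ℂ)) = ((α * π : ℝ) : ℂ) := by
            push_cast
            rw [neg_neg]
            field_simp
          have h2 : ((0 : ℂ) - (β:ℂ)^2 / (4 * -(1/α : ℂ))) = ((β ^ 2 * α / 4 : ℝ) : ℂ) := by
            have : (α : ℂ) ≠ 0 := by exact_mod_cast hα.ne'
            push_cast
            field_simp
            ring
          rw [h1, h2, ← Complex.ofReal_exp]
          rw [show ((α * π : ℝ) : ℂ) ^ (1/2 : ℂ) = ((Real.sqrt (α * π) : ℝ) : ℂ) by
            rw [Real.sqrt_eq_rpow, Complex.ofReal_cpow hπα]; norm_num]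
          rw [← Complex.ofReal_mul]
  have h0 := integral_ofReal (𝕜 := ℂ) (f := fun x : ℝ => Real.exp (β * x - x ^ 2 / α))
    (μ := (volume : Measure ℝ))
  exact Complex.ofReal_injective (h0.symm.trans h')

section Gauss

variable {n : ℕ} {α : ℝ}

set_option maxHeartbeats 1000000 in
lemma gaussianFock_exp_inner (hα : 0 < α) (c : ℝ) (z : EuclideanSpace ℂ (Fin n)) :
    Integrable (fun w : EuclideanSpace ℂ (Fin n) =>
        Real.exp (c * (inner ℝ z w : ℝ))) (gaussianFock n α) ∧
    ∫ w, Real.exp (c * (inner ℝ z w : ℝ)) ∂(gaussianFock n α)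
      = Real.exp (c ^ 2 * α * ‖z‖ ^ 2 / 4) := by
  have hπα : (0:ℝ) < α * π := by positivity
  set ρ : EuclideanSpace ℂ (Fin n) → ℝ≥0 :=
    fun w => Real.toNNReal (Real.exp (-‖w‖ ^ 2 / α) / (α * π) ^ n) with hρdef
  have hρmeas : Measurable ρ := by
    apply Continuous.measurable
    exact continuous_real_toNNReal.comp
      (((((continuous_norm.pow 2).neg).div_const α).rexp).div_const _)
  have hγ : gaussianFock n α = volume.withDensity (fun w => ((ρ w : ℝ≥0) : ℝ≥0∞)) := rfl
  have hρval : ∀ w : EuclideanSpace ℂ (Fin n),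
      ((ρ w : ℝ≥0) : ℝ) = Real.exp (-‖w‖ ^ 2 / α) / (α * π) ^ n := by
    intro w
    exact Real.coe_toNNReal _ (by positivity)
  -- orthonormal basis setup
  set b := stdOrthonormalBasis ℝ (EuclideanSpace ℂ (Fin n)) with hb
  have hcard : Fintype.card (Fin (Module.finrank ℝ (EuclideanSpace ℂ (Fin n)))) = 2 * n := by
    have h1 : Module.finrank ℝ ℂ * Module.finrank ℂ (EuclideanSpace ℂ (Fin n))
        = Module.finrank ℝ (EuclideanSpace ℂ (Fin n)) :=
      Module.finrank_mul_finrank ℝ ℂ _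
    rw [Complex.finrank_real_complex, finrank_euclideanSpace_fin] at h1
    rw [Fintype.card_fin, ← h1]
  set e := (MeasurableEquiv.toLp 2 (Fin (Module.finrank ℝ (EuclideanSpace ℂ (Fin n))) → ℝ)).symm
    with he
  set a := b.repr z with ha
  have hsum : ∑ i, a i ^ 2 = ‖z‖ ^ 2 := by
    have h1 : ‖a‖ = ‖z‖ := b.repr.norm_map z
    have h2 : ‖a‖ ^ 2 = ∑ i, a i ^ 2 := by
      rw [EuclideanSpace.norm_eq, Real.sq_sqrt (by positivity)]
      simp [Real.norm_eq_abs, _root_.sq_abs]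
    rw [← h2, h1]
  -- pointwise identity
  have hw2 : ∀ y, (inner ℝ z (b.repr.symm (e.symm y)) : ℝ) = ∑ i, a i * y i := by
    intro y
    have h1 : (inner ℝ z (b.repr.symm (e.symm y)) : ℝ)
        = (inner ℝ (b.repr z) (b.repr (b.repr.symm (e.symm y))) : ℝ) :=
      (b.repr.inner_map_map z _).symm
    rw [h1, b.repr.apply_symm_apply, PiLp.inner_apply]
    simp [RCLike.inner_apply]
    exact Finset.sum_congr rfl fun i _ => mul_comm _ _
  have hw1 : ∀ y, ‖b.repr.symm (e.symm y)‖ ^ 2 = ∑ i, y i ^ 2 := by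
    intro y
    rw [b.repr.symm.norm_map, EuclideanSpace.norm_eq, Real.sq_sqrt (by positivity)]
    simp only [Real.norm_eq_abs, _root_.sq_abs]
    exact Finset.sum_congr rfl fun i _ => rfl
  have key : ∀ y,
      ρ (b.repr.symm (e.symm y)) • Real.exp (c * (inner ℝ z (b.repr.symm (e.symm y)) : ℝ))
        = ∏ i, (Real.exp (c * a i * y i - y i ^ 2 / α) / Real.sqrt (α * π)) := by
    intro y
    rw [NNReal.smul_def, smul_eq_mul, hρval, hw1 y, hw2 y]
    rw [Finset.prod_div_distrib, Finset.prod_const]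
    have hc : Real.sqrt (α * π) ^ (Finset.univ
        (α := Fin (Module.finrank ℝ (EuclideanSpace ℂ (Fin n))))).card = (α * π) ^ n := by
      rw [Finset.card_univ, hcard, pow_mul, Real.sq_sqrt hπα.le]
    rw [hc, ← Real.exp_sum]
    have hsplit : ∑ i, (c * a i * y i - y i ^ 2 / α)
        = c * (∑ i, a i * y i) + (-(∑ i, y i ^ 2) / α) := by
      calc ∑ i, (c * a i * y i - y i ^ 2 / α)
          = ∑ i, (c * (a i * y i) + (-(y i ^ 2)) / α) :=
            Finset.sum_congr rfl fun i _ => by ring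
        _ = c * (∑ i, a i * y i) + (-(∑ i, y i ^ 2)) / α := by
            rw [Finset.sum_add_distrib, ← Finset.mul_sum, ← Finset.sum_div, ← Finset.sum_neg_distrib]
    rw [hsplit, Real.exp_add]
    ring
  -- embeddings
  have emb1 : MeasurableEmbedding (⇑b.repr.symm) :=
    b.repr.symm.toHomeomorph.measurableEmbedding
  have emb2 : MeasurableEmbedding (⇑e.symm) := e.symm.measurableEmbedding
  have mp1 : MeasurePreserving (⇑b.repr.symm) volume volume :=
    b.measurePreserving_repr_symm
  have mp2 : MeasurePreserving (⇑e.symm) volume volume :=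
    (EuclideanSpace.volume_preserving_symm_measurableEquiv_toLp _).symm
  -- integrability
  have int1D : ∀ i, Integrable
      (fun t : ℝ => Real.exp (c * a i * t - t ^ 2 / α) / Real.sqrt (α * π)) := fun i =>
    (gauss1D_integrable hα (c * a i)).div_const _
  have intprod : Integrable
      (fun y => ∏ i, (Real.exp (c * a i * (y i) - (y i) ^ 2 / α) / Real.sqrt (α * π)))
      (volume : Measure (Fin (Module.finrank ℝ (EuclideanSpace ℂ (Fin n))) → ℝ)) :=
    Integrable.fintype_prod (f := fun i t =>
        Real.exp (c * a i * t - t ^ 2 / α) / Real.sqrt (α * π)) int1D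
  have hint : Integrable (fun w => Real.exp (c * (inner ℝ z w : ℝ))) (gaussianFock n α) := by
    rw [hγ, integrable_withDensity_iff_integrable_smul hρmeas]
    rw [← (mp1.integrable_comp_emb emb1)]
    rw [← (mp2.integrable_comp_emb emb2)]
    refine intprod.congr (Filter.Eventually.of_forall fun y => ?_)
    exact (key y).symm
  refine ⟨hint, ?_⟩
  rw [hγ, integral_withDensity_eq_integral_smul hρmeas]
  rw [← mp1.integral_comp emb1, ← mp2.integral_comp emb2]
  rw [show (fun y => ρ ((b.repr.symm) (e.symm y))
      • Real.exp (c * (inner ℝ z ((b.repr.symm) (e.symm y)) : ℝ)))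
    = fun y => ∏ i, (Real.exp (c * a i * (y i) - (y i) ^ 2 / α) / Real.sqrt (α * π))
    from funext key]
  rw [MeasureTheory.integral_fintype_prod_volume_eq_prod
    (fun i t => Real.exp (c * a i * t - t ^ 2 / α) / Real.sqrt (α * π))]
  have h1 : ∀ i, (∫ t : ℝ, Real.exp (c * a i * t - t ^ 2 / α) / Real.sqrt (α * π))
      = Real.exp ((c * a i) ^ 2 * α / 4) := by
    intro i
    rw [integral_div, gauss1D hα (c * a i), mul_comm, mul_div_assoc,
      div_self (Real.sqrt_ne_zero'.2 hπα), mul_one]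
  rw [Finset.prod_congr rfl fun i _ => h1 i, ← Real.exp_sum]
  congr 1
  have h2 : ∑ i, (c * a i) ^ 2 * α / 4 = (∑ i, a i ^ 2) * (c ^ 2 * α / 4) := by
    rw [Finset.sum_mul]
    exact Finset.sum_congr rfl fun i _ => by ring
  rw [h2, hsum]
  ring

lemma gaussianFock_isProbability (hα : 0 < α) :
    IsProbabilityMeasure (gaussianFock n α) := by
  obtain ⟨hint, hval⟩ := gaussianFock_exp_inner (n := n) hα 0 0
  simp only [zero_mul, Real.exp_zero] at hint hval
  have hfin : (gaussianFock n α) Set.univ < ⊤ := by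
    rcases integrable_const_iff.1 hint with h | h
    · norm_num at h
    · exact h.measure_univ_lt_top
  have h1 : ((gaussianFock n α) Set.univ).toReal = 1 := by
    have := hval
    rw [integral_const, smul_eq_mul, mul_one] at this
    show (gaussianFock n α).real Set.univ = 1
    rw [this]; simp
  exact ⟨by
    have := ENNReal.toReal_eq_one_iff ((gaussianFock n α) Set.univ)
    exact this.1 h1⟩

end Gauss
section KBound

variable {n : ℕ} {α : ℝ}

lemma rip_re1 (z w : EuclideanSpace ℂ (Fin n)) :
    ((∑ j, w j * (starRingEnd ℂ) (z j)) : ℂ).re = (inner ℝ z w : ℝ) := by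
  rw [PiLp.inner_apply, Complex.re_sum]
  exact Finset.sum_congr rfl fun j _ => by rw [Complex.inner, mul_comm]

lemma rip_re2 (z w : EuclideanSpace ℂ (Fin n)) :
    ((∑ j, z j * (starRingEnd ℂ) (w j)) : ℂ).re = (inner ℝ z w : ℝ) := by
  have h1 : (∑ j, z j * (starRingEnd ℂ) (w j))
      = (starRingEnd ℂ) (∑ j, w j * (starRingEnd ℂ) (z j)) := by
    rw [map_sum]
    exact Finset.sum_congr rfl fun j _ => by
      rw [map_mul, Complex.conj_conj]; ring
  rw [h1, Complex.conj_re, rip_re1]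

lemma Kph_norm_le (hα : 0 < α) (z w : EuclideanSpace ℂ (Fin n)) :
    ‖Kph n α w z‖ ≤ 2 * Real.exp ((1/α) * (inner ℝ z w : ℝ)) + 1 := by
  have hre : ∀ u : ℂ, u.re = (inner ℝ z w : ℝ) →
      ‖cexp (u / (α:ℂ))‖ = Real.exp ((1/α) * (inner ℝ z w : ℝ)) := by
    intro u hu
    rw [Complex.norm_exp]
    congr 1
    rw [Complex.div_ofReal_re, hu]
    ring
  calc ‖Kph n α w z‖
      ≤ ‖cexp ((∑ j, w j * (starRingEnd ℂ) (z j)) / (α:ℂ))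
          + cexp ((∑ j, z j * (starRingEnd ℂ) (w j)) / (α:ℂ))‖ + ‖(1:ℂ)‖ :=
        norm_sub_le _ _
    _ ≤ ‖cexp ((∑ j, w j * (starRingEnd ℂ) (z j)) / (α:ℂ))‖
          + ‖cexp ((∑ j, z j * (starRingEnd ℂ) (w j)) / (α:ℂ))‖ + ‖(1:ℂ)‖ := by
        gcongr
        exact norm_add_le _ _
    _ = 2 * Real.exp ((1/α) * (inner ℝ z w : ℝ)) + 1 := by
        rw [hre _ (rip_re1 z w), hre _ (rip_re2 z w), norm_one]
        ring

lemma kz_pointwise (hα : 0 < α) (z : EuclideanSpace ℂ (Fin n))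
    (w : EuclideanSpace ℂ (Fin n)) :
    ‖Kph n α w z / ((Real.sqrt (2 * Real.exp (‖z‖ ^ 2 / α) - 1) : ℝ) : ℂ)‖
      ≤ (2 * Real.exp ((1/α) * (inner ℝ z w : ℝ)) + 1)
          / Real.sqrt (2 * Real.exp (‖z‖ ^ 2 / α) - 1) := by
  have ht0 : (0:ℝ) ≤ ‖z‖ ^ 2 / α := by positivity
  have he1 : (1:ℝ) ≤ Real.exp (‖z‖ ^ 2 / α) := Real.one_le_exp ht0
  have hD0 : (0:ℝ) < 2 * Real.exp (‖z‖ ^ 2 / α) - 1 := by linarith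
  have hs0 : (0:ℝ) < Real.sqrt (2 * Real.exp (‖z‖ ^ 2 / α) - 1) := Real.sqrt_pos.2 hD0
  rw [norm_div, Complex.norm_real, Real.norm_eq_abs, abs_of_pos hs0]
  gcongr
  exact Kph_norm_le hα z w

lemma kz_norm_le (hα : 0 < α) (z : EuclideanSpace ℂ (Fin n))
    (f : Lp ℂ 2 (gaussianFock n α))
    (hf : ⇑f =ᵐ[gaussianFock n α]
      fun w => Kph n α w z / ((Real.sqrt (2 * Real.exp (‖z‖ ^ 2 / α) - 1) : ℝ) : ℂ)) :
    ‖f‖ ≤ 4 := by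
  haveI := gaussianFock_isProbability (n := n) hα
  have ht0 : (0:ℝ) ≤ ‖z‖ ^ 2 / α := by positivity
  have he1 : (1:ℝ) ≤ Real.exp (‖z‖ ^ 2 / α) := Real.one_le_exp ht0
  have hD0 : (0:ℝ) < 2 * Real.exp (‖z‖ ^ 2 / α) - 1 := by linarith
  have hs2 : Real.sqrt (2 * Real.exp (‖z‖ ^ 2 / α) - 1) ^ 2
      = 2 * Real.exp (‖z‖ ^ 2 / α) - 1 := Real.sq_sqrt hD0.le
  have hs0 : (0:ℝ) < Real.sqrt (2 * Real.exp (‖z‖ ^ 2 / α) - 1) := Real.sqrt_pos.2 hD0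
  -- ‖f‖² as an integral
  have hnorm2 : ‖f‖ ^ 2 = ∫ w, ‖f w‖ ^ 2 ∂(gaussianFock n α) := by
    have h1 : (inner ℂ f f : ℂ) = ∫ w, ((‖f w‖ ^ 2 : ℝ) : ℂ) ∂(gaussianFock n α) := by
      rw [MeasureTheory.L2.inner_def]
      congr 1
      funext w
      rw [inner_self_eq_norm_sq_to_K]
      norm_cast
    have h0 := integral_ofReal (𝕜 := ℂ) (f := fun w => ‖f w‖ ^ 2) (μ := gaussianFock n α)
    calc ‖f‖ ^ 2 = RCLike.re (inner ℂ f f : ℂ) := norm_sq_eq_re_inner (𝕜 := ℂ) f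
      _ = RCLike.re ((∫ w, ‖f w‖ ^ 2 ∂(gaussianFock n α) : ℝ) : ℂ) := by
          rw [h1]; exact congrArg _ h0
      _ = ∫ w, ‖f w‖ ^ 2 ∂(gaussianFock n α) := by
          exact RCLike.ofReal_re _
  -- integrable majorant
  have hint : Integrable (fun w : EuclideanSpace ℂ (Fin n) =>
      (8 * Real.exp ((2/α) * (inner ℝ z w : ℝ)) + 2)
        / (2 * Real.exp (‖z‖ ^ 2 / α) - 1)) (gaussianFock n α) :=
    (((gaussianFock_exp_inner hα (2/α) z).1.const_mul 8).add (integrable_const 2)).div_const _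
  have hle : ∫ w, ‖f w‖ ^ 2 ∂(gaussianFock n α)
      ≤ ∫ w, (8 * Real.exp ((2/α) * (inner ℝ z w : ℝ)) + 2)
          / (2 * Real.exp (‖z‖ ^ 2 / α) - 1) ∂(gaussianFock n α) := by
    refine integral_mono_of_nonneg (Filter.Eventually.of_forall fun w => by positivity) hint ?_
    filter_upwards [hf] with w hw
    rw [hw]
    have h2 := kz_pointwise hα z w
    have h3 : ‖Kph n α w z / ((Real.sqrt (2 * Real.exp (‖z‖ ^ 2 / α) - 1) : ℝ) : ℂ)‖ ^ 2
        ≤ ((2 * Real.exp ((1/α) * (inner ℝ z w : ℝ)) + 1)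
            / Real.sqrt (2 * Real.exp (‖z‖ ^ 2 / α) - 1)) ^ 2 := by
      have := norm_nonneg (Kph n α w z / ((Real.sqrt (2 * Real.exp (‖z‖ ^ 2 / α) - 1) : ℝ) : ℂ))
      nlinarith
    refine h3.trans ?_
    rw [div_pow, hs2]
    have hexp2 : Real.exp ((1/α) * (inner ℝ z w : ℝ)) ^ 2
        = Real.exp ((2/α) * (inner ℝ z w : ℝ)) := by
      rw [sq, ← Real.exp_add]
      congr 1
      ring
    gcongr
    nlinarith [Real.exp_pos ((1/α) * (inner ℝ z w : ℝ)), hexp2,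
      sq_nonneg (2 * Real.exp ((1/α) * (inner ℝ z w : ℝ)) - 1)]
  have hval : ∫ w, (8 * Real.exp ((2/α) * (inner ℝ z w : ℝ)) + 2)
      / (2 * Real.exp (‖z‖ ^ 2 / α) - 1) ∂(gaussianFock n α)
      = (8 * Real.exp (‖z‖ ^ 2 / α) + 2) / (2 * Real.exp (‖z‖ ^ 2 / α) - 1) := by
    rw [integral_div, integral_add ((gaussianFock_exp_inner hα (2/α) z).1.const_mul 8)
      (integrable_const 2), integral_const_mul, (gaussianFock_exp_inner hα (2/α) z).2]
    have hexp : (2/α) ^ 2 * α * ‖z‖ ^ 2 / 4 = ‖z‖ ^ 2 / α := by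
      field_simp
      ring
    rw [hexp]
    simp
  have hfinal : ∫ w, ‖f w‖ ^ 2 ∂(gaussianFock n α) ≤ 10 := by
    rw [hval] at hle
    refine hle.trans ?_
    rw [div_le_iff₀ hD0]
    linarith
  have h16 : ‖f‖ ^ 2 ≤ 16 := by rw [hnorm2]; linarith
  nlinarith [norm_nonneg f, h16]

lemma inner_kz_le (hα : 0 < α) (z : EuclideanSpace ℂ (Fin n))
    (f g : Lp ℂ 2 (gaussianFock n α))
    (hf : ⇑f =ᵐ[gaussianFock n α]
      fun w => Kph n α w z / ((Real.sqrt (2 * Real.exp (‖z‖ ^ 2 / α) - 1) : ℝ) : ℂ))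
    {B : ℝ} (hB : 0 ≤ B) (hg : ∀ᵐ w ∂(gaussianFock n α), ‖g w‖ ≤ B) :
    ‖(inner ℂ g f : ℂ)‖ ≤ B * (2 * Real.exp (‖z‖ ^ 2 / α / 4) + 1)
        / Real.exp (‖z‖ ^ 2 / α / 2) := by
  haveI := gaussianFock_isProbability (n := n) hα
  have ht0 : (0:ℝ) ≤ ‖z‖ ^ 2 / α := by positivity
  have he1 : (1:ℝ) ≤ Real.exp (‖z‖ ^ 2 / α) := Real.one_le_exp ht0
  have hD0 : (0:ℝ) < 2 * Real.exp (‖z‖ ^ 2 / α) - 1 := by linarith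
  have hs0 : (0:ℝ) < Real.sqrt (2 * Real.exp (‖z‖ ^ 2 / α) - 1) := Real.sqrt_pos.2 hD0
  have hsge : Real.exp (‖z‖ ^ 2 / α / 2) ≤ Real.sqrt (2 * Real.exp (‖z‖ ^ 2 / α) - 1) := by
    rw [Real.exp_half]
    exact Real.sqrt_le_sqrt (by linarith)
  have hint : Integrable (fun w : EuclideanSpace ℂ (Fin n) =>
      B * ((2 * Real.exp ((1/α) * (inner ℝ z w : ℝ)) + 1)
        / Real.sqrt (2 * Real.exp (‖z‖ ^ 2 / α) - 1))) (gaussianFock n α) :=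
    ((((gaussianFock_exp_inner hα (1/α) z).1.const_mul 2).add
      (integrable_const 1)).div_const _).const_mul B
  rw [MeasureTheory.L2.inner_def]
  have step1 : ‖∫ w, (inner ℂ (g w) (f w) : ℂ) ∂(gaussianFock n α)‖
      ≤ ∫ w, B * ((2 * Real.exp ((1/α) * (inner ℝ z w : ℝ)) + 1)
          / Real.sqrt (2 * Real.exp (‖z‖ ^ 2 / α) - 1)) ∂(gaussianFock n α) := by
    refine norm_integral_le_of_norm_le hint ?_
    filter_upwards [hf, hg] with w hw hgw
    calc ‖(inner ℂ (g w) (f w) : ℂ)‖ ≤ ‖g w‖ * ‖f w‖ := norm_inner_le_norm _ _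
      _ ≤ B * ((2 * Real.exp ((1/α) * (inner ℝ z w : ℝ)) + 1)
          / Real.sqrt (2 * Real.exp (‖z‖ ^ 2 / α) - 1)) := by
        have h2 : ‖f w‖ ≤ (2 * Real.exp ((1/α) * (inner ℝ z w : ℝ)) + 1)
            / Real.sqrt (2 * Real.exp (‖z‖ ^ 2 / α) - 1) := by
          rw [hw]; exact kz_pointwise hα z w
        exact mul_le_mul hgw h2 (norm_nonneg _) hB
  refine step1.trans ?_
  rw [integral_const_mul, integral_div, integral_add
    ((gaussianFock_exp_inner hα (1/α) z).1.const_mul 2) (integrable_const 1),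
    integral_const_mul, (gaussianFock_exp_inner hα (1/α) z).2]
  have hexp : (1/α) ^ 2 * α * ‖z‖ ^ 2 / 4 = ‖z‖ ^ 2 / α / 4 := by
    field_simp
  rw [hexp]
  simp only [integral_const, probReal_univ, measure_univ, ENNReal.toReal_one, smul_eq_mul, one_mul, mul_one]
  rw [mul_div_assoc]
  gcongr

end KBound
section MainAux

variable {n : ℕ} {α : ℝ}

lemma tendsto_bound_zero (B : ℝ) :
    Filter.Tendsto (fun t : ℝ => B * (2 * Real.exp (t / 4) + 1) / Real.exp (t / 2))
      Filter.atTop (nhds 0) := by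
  have h1 : ∀ t : ℝ, B * (2 * Real.exp (t / 4) + 1) / Real.exp (t / 2)
      = B * (2 * Real.exp (-(t/4)) + Real.exp (-(t/2))) := by
    intro t
    rw [Real.exp_neg, Real.exp_neg]
    rw [mul_div_assoc, add_div, mul_div_assoc, ← Real.exp_sub,
      show t/4 - t/2 = -(t/4) by ring, Real.exp_neg, one_div]
  have e4 : Filter.Tendsto (fun t : ℝ => Real.exp (-(t/4))) Filter.atTop (nhds 0) :=
    Real.tendsto_exp_neg_atTop_nhds_zero.comp (Filter.tendsto_id.atTop_div_const (by norm_num))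
  have e2 : Filter.Tendsto (fun t : ℝ => Real.exp (-(t/2))) Filter.atTop (nhds 0) :=
    Real.tendsto_exp_neg_atTop_nhds_zero.comp (Filter.tendsto_id.atTop_div_const (by norm_num))
  have h2 := ((e4.const_mul 2).add e2).const_mul B
  simp only [mul_zero, zero_add, add_zero] at h2
  exact Filter.Tendsto.congr (fun t => (h1 t).symm) h2

lemma tendsto_inner_k (hα : 0 < α)
    (k : EuclideanSpace ℂ (Fin n) → PHsub n α)
    (hk : ∀ w, ⇑((k w : Lp ℂ 2 (gaussianFock n α))) =ᵐ[gaussianFock n α]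
      (fun z => Kph n α z w / (Real.sqrt (2 * Real.exp (‖w‖ ^ 2 / α) - 1) : ℂ)))
    (h : Lp ℂ 2 (gaussianFock n α)) :
    Filter.Tendsto (fun z => (inner ℂ h ((k z : Lp ℂ 2 (gaussianFock n α))) : ℂ))
      (Filter.comap (fun z : EuclideanSpace ℂ (Fin n) => ‖z‖) Filter.atTop) (nhds 0) := by
  have htt : Filter.Tendsto (fun z : EuclideanSpace ℂ (Fin n) => ‖z‖ ^ 2 / α)
      (Filter.comap (fun z => ‖z‖) Filter.atTop) Filter.atTop := by
    have h0 : Filter.Tendsto (fun z : EuclideanSpace ℂ (Fin n) => ‖z‖)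
        (Filter.comap (fun z => ‖z‖) Filter.atTop) Filter.atTop := Filter.tendsto_comap
    have h1 : Filter.Tendsto (fun z : EuclideanSpace ℂ (Fin n) => ‖z‖ ^ 2)
        (Filter.comap (fun z => ‖z‖) Filter.atTop) Filter.atTop := by
      have := h0.atTop_mul_atTop₀ h0
      refine this.congr fun z => ?_
      ring
    exact h1.atTop_div_const hα
  rw [Metric.tendsto_nhds]
  intro ε hε
  obtain ⟨sf, hsf, hsfmem⟩ := (Lp.memLp h).exists_simpleFunc_eLpNorm_sub_lt
    (by norm_num : (2:ℝ≥0∞) ≠ ∞) (ENNReal.ofReal_pos.2 (by positivity : (0:ℝ) < ε/8)).ne'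
  set sL := hsfmem.toLp ⇑sf with hsLdef
  have hsLcoe : ⇑sL =ᵐ[gaussianFock n α] ⇑sf := hsfmem.coeFn_toLp
  obtain ⟨C, hC⟩ := sf.exists_forall_norm_le
  have hBnn : (0:ℝ) ≤ |C| := abs_nonneg C
  have hbd : ∀ᵐ w ∂(gaussianFock n α), ‖sL w‖ ≤ |C| := by
    filter_upwards [hsLcoe] with w hw
    rw [hw]
    exact (hC w).trans (le_abs_self C)
  have hdist : ‖h - sL‖ < ε/8 := by
    have hae : ⇑(h - sL) =ᵐ[gaussianFock n α] (⇑h - ⇑sf) :=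
      (Lp.coeFn_sub h sL).trans ((Filter.EventuallyEq.refl _ _).sub hsLcoe)
    rw [Lp.norm_def, eLpNorm_congr_ae hae]
    exact ENNReal.toReal_lt_of_lt_ofReal hsf
  have hbound : Filter.Tendsto (fun z : EuclideanSpace ℂ (Fin n) =>
      |C| * (2 * Real.exp (‖z‖ ^ 2 / α / 4) + 1) / Real.exp (‖z‖ ^ 2 / α / 2))
      (Filter.comap (fun z => ‖z‖) Filter.atTop) (nhds 0) :=
    (tendsto_bound_zero |C|).comp htt
  have hev := (Metric.tendsto_nhds.1 hbound) (ε/2) (by positivity)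
  filter_upwards [hev] with z hz
  have h4 : ‖((k z : Lp ℂ 2 (gaussianFock n α)))‖ ≤ 4 := kz_norm_le hα z _ (hk z)
  have hsmall : ‖(inner ℂ sL ((k z : Lp ℂ 2 (gaussianFock n α))) : ℂ)‖
      ≤ |C| * (2 * Real.exp (‖z‖ ^ 2 / α / 4) + 1) / Real.exp (‖z‖ ^ 2 / α / 2) :=
    inner_kz_le hα z _ sL (hk z) hBnn hbd
  have hz2 : |C| * (2 * Real.exp (‖z‖ ^ 2 / α / 4) + 1) / Real.exp (‖z‖ ^ 2 / α / 2) < ε/2 := by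
    have := hz
    rw [Real.dist_eq, sub_zero] at this
    exact (le_abs_self _).trans_lt this
  have hsplit : (inner ℂ h ((k z : Lp ℂ 2 (gaussianFock n α))) : ℂ)
      = inner ℂ (h - sL) ((k z : Lp ℂ 2 (gaussianFock n α)))
        + inner ℂ sL ((k z : Lp ℂ 2 (gaussianFock n α))) := by
    rw [inner_sub_left]
    ring
  rw [dist_zero_right, hsplit]
  calc ‖(inner ℂ (h - sL) ((k z : Lp ℂ 2 (gaussianFock n α))) : ℂ)
        + inner ℂ sL ((k z : Lp ℂ 2 (gaussianFock n α)))‖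
      ≤ ‖(inner ℂ (h - sL) ((k z : Lp ℂ 2 (gaussianFock n α))) : ℂ)‖
        + ‖(inner ℂ sL ((k z : Lp ℂ 2 (gaussianFock n α))) : ℂ)‖ := norm_add_le _ _
    _ ≤ ‖h - sL‖ * 4 + (|C| * (2 * Real.exp (‖z‖ ^ 2 / α / 4) + 1)
          / Real.exp (‖z‖ ^ 2 / α / 2)) :=
        add_le_add ((norm_inner_le_norm _ _).trans
            (mul_le_mul_of_nonneg_left h4 (norm_nonneg _))) hsmall
    _ < ε/8 * 4 + ε/2 :=
        add_lt_add (mul_lt_mul_of_pos_right hdist (by norm_num)) hz2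
    _ ≤ ε := by linarith

end MainAux
/-- Let `T` be a compact operator on `PH²_α` and let `k w ∈ PH²_α` be the
normalized reproducing kernel `k_{ph,α}(·,w) = K_{ph,α}(·,w) / √(2 e^{|w|²/α} − 1)`. Then the
Berezin transform `T̃(z) = ⟨T k_{ph,α}(·,z), k_{ph,α}(·,z)⟩` tends to `0` as `|z| → ∞`. -/
theorem berezinTransformOfCompactVanishes (n : ℕ) (hn : 0 < n) (α : ℝ) (hα : 0 < α)
    (T : PHsub n α →L[ℂ] PHsub n α) (hTcompact : IsCompactOperator T)
    (k : EuclideanSpace ℂ (Fin n) → PHsub n α)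
    (hk : ∀ w, ⇑((k w : Lp ℂ 2 (gaussianFock n α))) =ᵐ[gaussianFock n α]
      (fun z => Kph n α z w / (Real.sqrt (2 * Real.exp (‖w‖ ^ 2 / α) - 1) : ℂ))) :
    Filter.Tendsto (fun z : EuclideanSpace ℂ (Fin n) => (inner ℂ (T (k z)) (k z) : ℂ))
      (Filter.comap (fun z => ‖z‖) Filter.atTop) (nhds 0) := by
  classical
  -- the filter is nontrivial
  haveI hFne : (Filter.comap (fun z : EuclideanSpace ℂ (Fin n) => ‖z‖) Filter.atTop).NeBot := by
    refine Filter.comap_neBot fun t ht => ?_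
    rcases Filter.mem_atTop_sets.1 ht with ⟨a, ha⟩
    refine ⟨EuclideanSpace.single (⟨0, hn⟩ : Fin n) ((max a 0 : ℝ) : ℂ), ha _ ?_⟩
    rw [EuclideanSpace.norm_single, Complex.norm_real, Real.norm_eq_abs,
      _root_.abs_of_nonneg (le_max_right a 0)]
    exact le_max_left a 0
  -- weak convergence of T (k z) tested against any fixed vector
  have claim3 : ∀ x : PHsub n α, Filter.Tendsto (fun z => (inner ℂ x (T (k z)) : ℂ))
      (Filter.comap (fun z : EuclideanSpace ℂ (Fin n) => ‖z‖) Filter.atTop) (nhds 0) := by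
    intro x
    set L : PHsub n α →L[ℂ] ℂ := (innerSL ℂ x).comp T with hL
    obtain ⟨g, hg, -⟩ := exists_extension_norm_eq (PHsub n α) L
    obtain ⟨m, hm⟩ := (InnerProductSpace.toDual ℂ (Lp ℂ 2 (gaussianFock n α))).surjective g
    have hLz : ∀ z, (inner ℂ x (T (k z)) : ℂ)
        = (inner ℂ m ((k z : Lp ℂ 2 (gaussianFock n α))) : ℂ) := by
      intro z
      calc (inner ℂ x (T (k z)) : ℂ) = L (k z) := by simp [hL]
        _ = g ↑(k z) := (hg (k z)).symm
        _ = (inner ℂ m ((k z : Lp ℂ 2 (gaussianFock n α))) : ℂ) := by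
            rw [← hm]
            exact InnerProductSpace.toDual_apply_apply
    simp only [hLz]
    exact tendsto_inner_k hα k hk m
  -- cluster points of T (k z) are trivial
  have claim2 : ∀ x : PHsub n α,
      ClusterPt x (Filter.map (fun z => T (k z))
        (Filter.comap (fun z : EuclideanSpace ℂ (Fin n) => ‖z‖) Filter.atTop)) → x = 0 := by
    intro x hx
    have hcont : ContinuousAt (fun y : PHsub n α => (inner ℂ x y : ℂ)) x :=
      (continuous_const.inner continuous_id).continuousAt
    have hmap := hx.map hcont (Filter.tendsto_map (f := fun y : PHsub n α => (inner ℂ x y : ℂ)))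
    rw [Filter.map_map] at hmap
    have h0 : Filter.map ((fun y : PHsub n α => (inner ℂ x y : ℂ)) ∘ (fun z => T (k z)))
        (Filter.comap (fun z : EuclideanSpace ℂ (Fin n) => ‖z‖) Filter.atTop) ≤ nhds 0 :=
      claim3 x
    have hinner0 : (inner ℂ x x : ℂ) = 0 := by
      have hne2 := hmap
      have h3 : (nhds (inner ℂ x x : ℂ) ⊓ nhds 0).NeBot :=
        Filter.NeBot.mono hne2 (inf_le_inf_left _ h0)
      exact t2_iff_nhds.1 inferInstance h3
    exact inner_self_eq_zero.1 hinner0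
  -- compactness: all T (k z) live in one compact set
  obtain ⟨V, hV, K, hK, hTV⟩ :=
    (isCompactOperator_iff_exists_mem_nhds_image_subset_compact (⇑T)).1 hTcompact
  obtain ⟨r, hr, hball⟩ := Metric.mem_nhds_iff.1 hV
  have hc0 : (0:ℝ) < 8 / r := by positivity
  have hcne : (((8 / r : ℝ) : ℂ)) ≠ 0 := by
    exact_mod_cast hc0.ne'
  set K' := (fun y : PHsub n α => (((8 / r : ℝ) : ℂ)) • y) '' K with hK'
  have hK'c : IsCompact K' := hK.image (continuous_const_smul _)
  have hker_in : ∀ z, T (k z) ∈ K' := by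
    intro z
    have hnorm : ‖k z‖ ≤ 4 := kz_norm_le hα z _ (hk z)
    have hmem : (((8 / r : ℝ) : ℂ))⁻¹ • k z ∈ ball (0 : PHsub n α) r := by
      rw [mem_ball_zero_iff, norm_smul, norm_inv, Complex.norm_real, Real.norm_eq_abs,
        abs_of_pos hc0]
      have h1 : (8 / r)⁻¹ * ‖k z‖ ≤ (8 / r)⁻¹ * 4 :=
        mul_le_mul_of_nonneg_left hnorm (by positivity)
      have h2 : (8 / r)⁻¹ * 4 = r / 2 := by
        field_simp
        ring
      calc (8 / r)⁻¹ * ‖k z‖ ≤ r / 2 := h2 ▸ h1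
        _ < r := by linarith
    have hTm : T ((((8 / r : ℝ) : ℂ))⁻¹ • k z) ∈ K :=
      hTV ⟨_, hball hmem, rfl⟩
    refine ⟨T ((((8 / r : ℝ) : ℂ))⁻¹ • k z), hTm, ?_⟩
    show (((8 / r : ℝ) : ℂ)) • T ((((8 / r : ℝ) : ℂ))⁻¹ • k z) = T (k z)
    rw [← T.map_smul, smul_inv_smul₀ hcne]
  -- claim1 : norm convergence of T (k z) to 0
  have claim1 : Filter.Tendsto (fun z => T (k z))
      (Filter.comap (fun z : EuclideanSpace ℂ (Fin n) => ‖z‖) Filter.atTop) (nhds 0) := by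
    by_contra hnot
    rw [Metric.tendsto_nhds] at hnot
    push_neg at hnot
    obtain ⟨ε, hε, hfreq⟩ := hnot
    set l := Filter.map (fun z => T (k z))
      (Filter.comap (fun z : EuclideanSpace ℂ (Fin n) => ‖z‖) Filter.atTop)
      ⊓ Filter.principal {y : PHsub n α | ε ≤ dist y 0} with hl
    have hne : l.NeBot := by
      refine Filter.inf_principal_neBot_iff.2 fun U hU => ?_
    -- frequently bad points hit U
      have hU' : (fun z => T (k z)) ⁻¹' U ∈
          Filter.comap (fun z : EuclideanSpace ℂ (Fin n) => ‖z‖) Filter.atTop :=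
        Filter.mem_map.1 hU
      obtain ⟨z, hz1, hz2⟩ := (hfreq.and_eventually hU').exists
      exact ⟨T (k z), hz2, hz1⟩
    have hsub : l ≤ Filter.principal K' := by
      refine le_trans inf_le_left ?_
      rw [Filter.le_principal_iff, Filter.mem_map]
      exact Filter.univ_mem' hker_in
    obtain ⟨x, hxK, hxcl⟩ := hK'c.exists_clusterPt hsub
    have hx0 : x = 0 := claim2 x (hxcl.mono inf_le_left)
    have hx2 : x ∈ closure {y : PHsub n α | ε ≤ dist y 0} :=
      mem_closure_iff_clusterPt.2 (hxcl.mono inf_le_right)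
    have hclosed : IsClosed {y : PHsub n α | ε ≤ dist y 0} :=
      isClosed_le continuous_const (continuous_id.dist continuous_const)
    rw [hclosed.closure_eq, hx0] at hx2
    simp only [Set.mem_setOf_eq, dist_self] at hx2
    linarith
  -- conclude by squeezing
  have hb : ∀ z, ‖(inner ℂ (T (k z)) (k z) : ℂ)‖ ≤ ‖T (k z)‖ * 4 := by
    intro z
    refine (norm_inner_le_norm (𝕜 := ℂ) (T (k z)) (k z)).trans ?_
    exact mul_le_mul_of_nonneg_left (kz_norm_le hα z _ (hk z)) (norm_nonneg _)
  have hlim : Filter.Tendsto (fun z => ‖T (k z)‖ * 4)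
      (Filter.comap (fun z : EuclideanSpace ℂ (Fin n) => ‖z‖) Filter.atTop) (nhds 0) := by
    have h1 := claim1.norm
    simp only [norm_zero] at h1
    simpa using h1.mul_const 4
  exact squeeze_zero_norm hb hlim
end

section
/- Let α > 0. For every u ∈ ℂⁿ one has (1/(απ)^n) ∫_{ℂⁿ} |K_{ph,α}(z,u)|² e^{-|z|²/α} dA(z) = K_{ph,α}(u,u) = 2e^{|u|²/α} − 1. -/
open MeasureTheory Metric Complex Filter
open scoped ENNReal Real

lemma norm_sq_eq_sum {n : ℕ} (z : EuclideanSpace ℂ (Fin n)) :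
    ‖z‖ ^ 2 = ∑ j, Complex.normSq (z j) := by
  rw [EuclideanSpace.norm_eq, Real.sq_sqrt (by positivity)]
  exact Finset.sum_congr rfl fun j _ => by rw [Complex.sq_norm]

lemma oneDimIntegrable {α : ℝ} (hα : 0 < α) (c : ℂ) :
    Integrable fun t : ℝ => Complex.exp (-(1/(α:ℂ)) * t^2 + c * t) := by
  have hb : (-(1/(α:ℂ))).re < 0 := by
    rw [show -(1/(α:ℂ)) = ((-(1/α) : ℝ) : ℂ) by push_cast; ring, Complex.ofReal_re]
    have : (0:ℝ) < 1/α := by positivity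
    linarith
  simpa using integrable_cexp_quadratic' hb c 0

lemma oneDimInt {α : ℝ} (hα : 0 < α) (c : ℂ) :
    ∫ t : ℝ, Complex.exp (-(1/(α:ℂ)) * t^2 + c * t)
      = ((π : ℂ) * α) ^ (1/2 : ℂ) * Complex.exp (c ^ 2 * α / 4) := by
  have hα' : (α : ℂ) ≠ 0 := Complex.ofReal_ne_zero.mpr hα.ne'
  have hb : (-(1/(α:ℂ))).re < 0 := by
    rw [show -(1/(α:ℂ)) = ((-(1/α) : ℝ) : ℂ) by push_cast; ring, Complex.ofReal_re]
    have : (0:ℝ) < 1/α := by positivity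
    linarith
  have h := integral_cexp_quadratic hb c 0
  simp only [add_zero, zero_sub] at h
  rw [h, show ((π:ℂ) / -(-(1/(α:ℂ)))) = ((π:ℂ)*α) by rw [neg_neg]; field_simp,
    show -(c^2/(4 * -(1/(α:ℂ)))) = c^2*α/4 by field_simp]

lemma pairInt {α : ℝ} (hα : 0 < α) (c₁ c₂ : ℂ) :
    (∫ t : ℝ, Complex.exp (-(1/(α:ℂ)) * t^2 + c₁ * t)) *
      (∫ t : ℝ, Complex.exp (-(1/(α:ℂ)) * t^2 + c₂ * t))
      = ((α * π : ℝ) : ℂ) * Complex.exp ((c₁^2 + c₂^2) * α / 4) := by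
  have hne : ((π:ℂ) * α) ≠ 0 :=
    mul_ne_zero (Complex.ofReal_ne_zero.mpr Real.pi_ne_zero) (Complex.ofReal_ne_zero.mpr hα.ne')
  rw [oneDimInt hα c₁, oneDimInt hα c₂, mul_mul_mul_comm, ← Complex.cpow_add _ _ hne,
    show (1/2 + 1/2 : ℂ) = 1 by norm_num, Complex.cpow_one, ← Complex.exp_add]
  push_cast
  ring_nf

lemma coordEq {α : ℝ} (hα : α ≠ 0) (a b w : ℂ) :
    Complex.exp ((w * (starRingEnd ℂ) a + b * (starRingEnd ℂ) w - (Complex.normSq w : ℂ)) / α)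
      = Complex.exp (-(1/(α:ℂ)) * (w.re:ℂ)^2 + (((starRingEnd ℂ) a + b)/α) * (w.re:ℂ))
        * Complex.exp (-(1/(α:ℂ)) * (w.im:ℂ)^2 + (((starRingEnd ℂ) a - b)*I/α) * (w.im:ℂ)) := by
  have hα' : (α : ℂ) ≠ 0 := Complex.ofReal_ne_zero.mpr hα
  rw [← Complex.exp_add]
  congr 1
  rw [Complex.normSq_apply]
  set x := w.re with hx
  set y := w.im with hy
  have hw : w = (x:ℂ) + (y:ℂ)*I := (Complex.re_add_im w).symm
  rw [hw]
  simp only [map_add, map_mul, Complex.conj_ofReal, Complex.conj_I]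
  field_simp
  push_cast
  ring

noncomputable def gfun (n : ℕ) (α : ℝ) (a b z : EuclideanSpace ℂ (Fin n)) : ℂ :=
  Complex.exp (((∑ j, z j * (starRingEnd ℂ) (a j)) + (∑ j, b j * (starRingEnd ℂ) (z j))
    - ((‖z‖ ^ 2 : ℝ) : ℂ)) / α)

set_option maxHeartbeats 2000000 in
lemma gaussInt (n : ℕ) {α : ℝ} (hα : 0 < α) (a b : EuclideanSpace ℂ (Fin n)) :
    Integrable (gfun n α a b) ∧
      ∫ z, gfun n α a b z
        = (((α * π) ^ n : ℝ) : ℂ) *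
            Complex.exp ((∑ j, b j * (starRingEnd ℂ) (a j)) / α) := by
  have hα' : (α : ℂ) ≠ 0 := Complex.ofReal_ne_zero.mpr hα.ne'
  classical
  set c : ((_ : Fin n) × Fin 2) → ℂ := fun s =>
    ![((starRingEnd ℂ) (a s.1) + b s.1)/α, ((starRingEnd ℂ) (a s.1) - b s.1)*I/α] s.2 with hc
  set h : ((_ : Fin n) × Fin 2) → ℝ → ℂ :=
    fun s t => Complex.exp (-(1/(α:ℂ)) * t^2 + c s * t) with hh
  set B := Pi.orthonormalBasis (fun _ : Fin n => Complex.orthonormalBasisOneI) with hB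
  set m := B.measurableEquiv.trans (MeasurableEquiv.toLp 2 (((_ : Fin n) × Fin 2) → ℝ)).symm with hmdef
  have hm : MeasurePreserving m volume volume :=
    (EuclideanSpace.volume_preserving_symm_measurableEquiv_toLp _).comp
      B.measurePreserving_measurableEquiv
  have hms : ∀ (z : EuclideanSpace ℂ (Fin n)) (s : (_ : Fin n) × Fin 2),
      m z s = ![(z s.1).re, (z s.1).im] s.2 := by
    intro z s
    have h0 : m z s = B.repr z s := rfl
    rw [h0, hB, Pi.orthonormalBasis_repr, Complex.orthonormalBasisOneI_repr_apply]
  have key : ∀ z : EuclideanSpace ℂ (Fin n), gfun n α a b z = ∏ s, h s (m z s) := by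
    intro z
    have h1 : ((‖z‖^2 : ℝ) : ℂ) = ∑ j, (Complex.normSq (z j) : ℂ) := by
      rw [norm_sq_eq_sum]; push_cast; rfl
    rw [gfun, h1,
      show ((∑ j, z j * (starRingEnd ℂ) (a j)) + (∑ j, b j * (starRingEnd ℂ) (z j))
          - ∑ j, (Complex.normSq (z j) : ℂ))
        = ∑ j, (z j * (starRingEnd ℂ) (a j) + b j * (starRingEnd ℂ) (z j)
            - (Complex.normSq (z j) : ℂ)) by
        rw [Finset.sum_sub_distrib, Finset.sum_add_distrib],
      Finset.sum_div, Complex.exp_sum, ← Finset.univ_sigma_univ, Finset.prod_sigma]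
    refine Finset.prod_congr rfl fun j _ => ?_
    rw [Fin.prod_univ_two]
    have e0 : m z ⟨j, 0⟩ = (z j).re := by rw [hms]; rfl
    have e1 : m z ⟨j, 1⟩ = (z j).im := by rw [hms]; rfl
    rw [e0, e1, hh]
    simp only [hc, Matrix.cons_val_zero, Matrix.cons_val_one, Matrix.head_cons]
    exact coordEq hα.ne' (a j) (b j) (z j)
  have hint : Integrable (fun y : ((_ : Fin n) × Fin 2) → ℝ => ∏ s, h s (y s)) :=
    Integrable.fintype_prod fun s => oneDimIntegrable hα (c s)
  have hintf : Integrable (gfun n α a b) := by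
    have heq : gfun n α a b = (fun y : ((_ : Fin n) × Fin 2) → ℝ => ∏ s, h s (y s)) ∘ m :=
      funext key
    rw [heq]
    exact (hm.integrable_comp_emb (MeasurableEquiv.measurableEmbedding m)).mpr hint
  refine ⟨hintf, ?_⟩
  have hsq : ∀ x : ℂ, (x * I / α)^2 = -(x^2/(α:ℂ)^2) := fun x => by
    rw [div_pow, mul_pow, Complex.I_sq]; ring
  calc ∫ z, gfun n α a b z
      = ∫ z, (fun y : ((_ : Fin n) × Fin 2) → ℝ => ∏ s, h s (y s)) (m z) := by
        simp_rw [key]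
    _ = ∫ y : ((_ : Fin n) × Fin 2) → ℝ, ∏ s, h s (y s) :=
        hm.integral_comp' fun y => ∏ s, h s (y s)
    _ = ∏ s : ((_ : Fin n) × Fin 2), ∫ t : ℝ, h s t :=
        MeasureTheory.integral_fintype_prod_eq_prod h
    _ = ∏ j : Fin n, ∏ k : Fin 2, ∫ t : ℝ, h ⟨j, k⟩ t := by
        rw [← Finset.univ_sigma_univ, Finset.prod_sigma]
    _ = ∏ j : Fin n, ((α * π : ℝ) : ℂ) * Complex.exp (b j * (starRingEnd ℂ) (a j) / α) := by
        refine Finset.prod_congr rfl fun j _ => ?_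
        rw [Fin.prod_univ_two, hh]
        rw [pairInt hα (c ⟨j, 0⟩) (c ⟨j, 1⟩)]
        congr 1
        simp only [hc, Matrix.cons_val_zero, Matrix.cons_val_one, Matrix.head_cons]
        rw [hsq]
        congr 1
        field_simp
        ring
    _ = (((α * π) ^ n : ℝ) : ℂ) * Complex.exp ((∑ j, b j * (starRingEnd ℂ) (a j)) / α) := by
        rw [Finset.prod_mul_distrib, Finset.prod_const, ← Complex.exp_sum, Finset.card_univ,
          Fintype.card_fin, ← Finset.sum_div]
        push_cast
        ring


lemma mainPointwise (n : ℕ) {α : ℝ} (hα : 0 < α) (u z : EuclideanSpace ℂ (Fin n)) :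
    ((‖Kph n α z u‖ ^ 2 * Real.exp (-‖z‖ ^ 2 / α) : ℝ) : ℂ)
      = gfun n α ((2:ℂ) • u) 0 z + gfun n α 0 ((2:ℂ) • u) z + 2 * gfun n α u u z
        - 2 * gfun n α u 0 z - 2 * gfun n α 0 u z + gfun n α 0 0 z := by
  have hα' : (α : ℂ) ≠ 0 := Complex.ofReal_ne_zero.mpr hα.ne'
  have hconjS : (starRingEnd ℂ) ((∑ j, z j * (starRingEnd ℂ) (u j)) / (α:ℂ))
      = (∑ j, u j * (starRingEnd ℂ) (z j)) / α := by
    rw [map_div₀, map_sum, Complex.conj_ofReal]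
    congr 1
    exact Finset.sum_congr rfl fun j _ => by
      rw [map_mul, Complex.conj_conj]; ring
  have hconjT : (starRingEnd ℂ) ((∑ j, u j * (starRingEnd ℂ) (z j)) / (α:ℂ))
      = (∑ j, z j * (starRingEnd ℂ) (u j)) / α := by
    rw [map_div₀, map_sum, Complex.conj_ofReal]
    congr 1
    exact Finset.sum_congr rfl fun j _ => by
      rw [map_mul, Complex.conj_conj]; ring
  have hcast : ((‖Kph n α z u‖^2 : ℝ) : ℂ)
      = Kph n α z u * (starRingEnd ℂ) (Kph n α z u) := by
    rw [Complex.mul_conj']; push_cast; ring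
  have hKconj : (starRingEnd ℂ) (Kph n α z u)
      = Complex.exp ((∑ j, u j * (starRingEnd ℂ) (z j)) / (α:ℂ)) +
          Complex.exp ((∑ j, z j * (starRingEnd ℂ) (u j)) / (α:ℂ)) - 1 := by
    rw [Kph, map_sub, map_add, map_one, ← Complex.exp_conj, ← Complex.exp_conj, hconjS, hconjT]
  have e1 : (∑ j, z j * (starRingEnd ℂ) (((2:ℂ) • u) j))
      = 2 * ∑ j, z j * (starRingEnd ℂ) (u j) := by
    rw [Finset.mul_sum]
    exact Finset.sum_congr rfl fun j _ => by
      simp only [PiLp.smul_apply, smul_eq_mul, map_mul, map_ofNat]; ring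
  have e2 : (∑ j, ((2:ℂ) • u) j * (starRingEnd ℂ) (z j))
      = 2 * ∑ j, u j * (starRingEnd ℂ) (z j) := by
    rw [Finset.mul_sum]
    exact Finset.sum_congr rfl fun j _ => by
      simp only [PiLp.smul_apply, smul_eq_mul]; ring
  have e0a : (∑ j, z j * (starRingEnd ℂ) ((0 : EuclideanSpace ℂ (Fin n)) j)) = 0 := by
    simp
  have e0b : (∑ j, (0 : EuclideanSpace ℂ (Fin n)) j * (starRingEnd ℂ) (z j)) = 0 := by
    simp
  rw [Complex.ofReal_mul, Complex.ofReal_exp, hcast, hKconj]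
  simp only [gfun, e1, e2, e0a, e0b, Kph]
  set A := ∑ j, z j * (starRingEnd ℂ) (u j) with hA
  set Bz := ∑ j, u j * (starRingEnd ℂ) (z j) with hBz
  set M := ((‖z‖^2 : ℝ) : ℂ) with hM
  have c1 : ((-‖z‖^2/α : ℝ) : ℂ) = -(M/α) := by rw [hM]; push_cast; ring
  rw [c1,
    show (2*A + 0 - M)/(α:ℂ) = A/α + A/α + -(M/α) by ring,
    show ((0:ℂ) + 2*Bz - M)/(α:ℂ) = Bz/α + Bz/α + -(M/α) by ring,
    show (A + Bz - M)/(α:ℂ) = A/α + Bz/α + -(M/α) by ring,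
    show (A + 0 - M)/(α:ℂ) = A/α + -(M/α) by ring,
    show ((0:ℂ) + Bz - M)/(α:ℂ) = Bz/α + -(M/α) by ring,
    show ((0:ℂ) + 0 - M)/(α:ℂ) = (0:ℂ) + -(M/α) by ring]
  simp only [Complex.exp_add, Complex.exp_zero]
  ring


/-- For every `u ∈ ℂⁿ`,
`(1/(απ)^n) ∫_{ℂⁿ} |K_{ph,α}(z,u)|² e^{-|z|²/α} dA(z) = K_{ph,α}(u,u) = 2 e^{|u|²/α} − 1`. -/
theorem kernelSelfIntegral (n : ℕ) (hn : 0 < n) (α : ℝ) (hα : 0 < α)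
    (u : EuclideanSpace ℂ (Fin n)) :
    (1 / (α * π) ^ n) * (∫ z, ‖Kph n α z u‖ ^ 2 * Real.exp (-‖z‖ ^ 2 / α)) =
        2 * Real.exp (‖u‖ ^ 2 / α) - 1 ∧
      Kph n α u u = ((2 * Real.exp (‖u‖ ^ 2 / α) - 1 : ℝ) : ℂ) := by

  have hα' : (α : ℂ) ≠ 0 := Complex.ofReal_ne_zero.mpr hα.ne'
  have hX : ((α * π) ^ n : ℝ) ≠ 0 := by positivity
  have hu : (∑ j, u j * (starRingEnd ℂ) (u j)) = ((‖u‖^2 : ℝ) : ℂ) := by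
    simp only [Complex.mul_conj]
    rw [norm_sq_eq_sum u]
    push_cast
    ring
  constructor
  · have hcalc : ((∫ z, ‖Kph n α z u‖^2 * Real.exp (-‖z‖^2/α) : ℝ) : ℂ)
        = (((α*π)^n : ℝ) : ℂ) * (2 * Complex.exp (((‖u‖^2 : ℝ) : ℂ)/α) - 1) := by
      have hofreal : (∫ (z : EuclideanSpace ℂ (Fin n)),
            ((‖Kph n α z u‖^2 * Real.exp (-‖z‖^2/α) : ℝ) : ℂ))
          = ((∫ z, ‖Kph n α z u‖^2 * Real.exp (-‖z‖^2/α) : ℝ) : ℂ) := integral_ofReal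
      rw [← hofreal]
      rw [show (fun z : EuclideanSpace ℂ (Fin n) =>
            ((‖Kph n α z u‖^2 * Real.exp (-‖z‖^2/α) : ℝ) : ℂ))
          = fun z => gfun n α ((2:ℂ) • u) 0 z + gfun n α 0 ((2:ℂ) • u) z + 2 * gfun n α u u z
            - 2 * gfun n α u 0 z - 2 * gfun n α 0 u z + gfun n α 0 0 z
          from funext (mainPointwise n hα u)]
      have I1 := gaussInt n hα ((2:ℂ) • u) 0
      have I2 := gaussInt n hα 0 ((2:ℂ) • u)
      have I3 := gaussInt n hα u u
      have I4 := gaussInt n hα u 0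
      have I5 := gaussInt n hα 0 u
      have I6 := gaussInt n hα 0 0
      have J3 : Integrable (fun z : EuclideanSpace ℂ (Fin n) => 2 * gfun n α u u z) volume :=
        I3.1.const_mul 2
      have J4 : Integrable (fun z : EuclideanSpace ℂ (Fin n) => 2 * gfun n α u 0 z) volume :=
        I4.1.const_mul 2
      have J5 : Integrable (fun z : EuclideanSpace ℂ (Fin n) => 2 * gfun n α 0 u z) volume :=
        I5.1.const_mul 2
      have J12 : Integrable (fun z : EuclideanSpace ℂ (Fin n) =>
          gfun n α ((2:ℂ) • u) 0 z + gfun n α 0 ((2:ℂ) • u) z) volume := I1.1.add I2.1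
      have J123 : Integrable (fun z : EuclideanSpace ℂ (Fin n) =>
          gfun n α ((2:ℂ) • u) 0 z + gfun n α 0 ((2:ℂ) • u) z + 2 * gfun n α u u z) volume :=
        J12.add J3
      have J1234 : Integrable (fun z : EuclideanSpace ℂ (Fin n) =>
          gfun n α ((2:ℂ) • u) 0 z + gfun n α 0 ((2:ℂ) • u) z + 2 * gfun n α u u z
            - 2 * gfun n α u 0 z) volume := J123.sub J4
      have J12345 : Integrable (fun z : EuclideanSpace ℂ (Fin n) =>
          gfun n α ((2:ℂ) • u) 0 z + gfun n α 0 ((2:ℂ) • u) z + 2 * gfun n α u u z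
            - 2 * gfun n α u 0 z - 2 * gfun n α 0 u z) volume := J1234.sub J5
      rw [integral_add J12345 I6.1, integral_sub J1234 J5, integral_sub J123 J4,
        integral_add J12 J3, integral_add I1.1 I2.1,
        integral_const_mul, integral_const_mul,
        integral_const_mul,
        I1.2, I2.2, I3.2, I4.2, I5.2, I6.2, hu]
      simp only [PiLp.zero_apply, zero_mul, mul_zero, map_zero, Finset.sum_const_zero,
        zero_div, Complex.exp_zero, mul_one]
      ring
    have hreal : (∫ z, ‖Kph n α z u‖^2 * Real.exp (-‖z‖^2/α))
        = (α*π)^n * (2 * Real.exp (‖u‖^2/α) - 1) := by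
      rw [show (((α*π)^n : ℝ) : ℂ) * (2 * Complex.exp (((‖u‖^2 : ℝ) : ℂ)/α) - 1)
          = (((α*π)^n * (2 * Real.exp (‖u‖^2/α) - 1) : ℝ) : ℂ) by push_cast; ring] at hcalc
      exact_mod_cast hcalc
    rw [hreal]
    field_simp
  · rw [Kph, hu, ← Complex.ofReal_div, ← Complex.ofReal_exp]
    push_cast
    ring
end

section
/- Let α > 0 and let μ be a positive Borel measure on ℂⁿ that is radial, i.e. invariant under every ℝ-linear isometry of ℂⁿ ≅ ℝ^{2n}, and satisfies ∫_{ℂⁿ} e^{-|w|²/α} dμ(w) < ∞. Let h : ℂⁿ → ℂ be entire with h(0) = 0, and let z ∈ ℂⁿ be such that ∫_{ℂⁿ} |exp(⟨z,w⟩/α) conj(h(w))| e^{-|w|²/α} dμ(w) < ∞. Then ∫_{ℂⁿ} exp(⟨z,w⟩/α) conj(h(w)) e^{-|w|²/α} dμ(w) = 0. (Consequently, for radial μ the operator T_{M,μ} P_N is the zero operator.) -/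
open MeasureTheory Metric Complex Filter
open scoped ENNReal Real

/-- A positive Borel measure `μ` on `ℂⁿ` is radial if it is invariant under every
`ℝ`-linear isometry of `ℂⁿ ≅ ℝ^{2n}`. -/
def IsRadial {n : ℕ} (μ : Measure (EuclideanSpace ℂ (Fin n))) : Prop :=
  ∀ (U : EuclideanSpace ℂ (Fin n) ≃ₗᵢ[ℝ] EuclideanSpace ℂ (Fin n))
    (E : Set (EuclideanSpace ℂ (Fin n))), MeasurableSet E → μ (U ⁻¹' E) = μ E

/-- Multiplication by a unimodular complex scalar, as an `ℝ`-linear isometry of `ℂⁿ`. -/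
noncomputable def rotIso (n : ℕ) (c : ℂ) (hc : ‖c‖ = 1) :
    EuclideanSpace ℂ (Fin n) ≃ₗᵢ[ℝ] EuclideanSpace ℂ (Fin n) where
  toFun := fun w => c • w
  map_add' := smul_add c
  map_smul' := fun r w => smul_comm c r w
  invFun := fun w => c⁻¹ • w
  left_inv := fun w => inv_smul_smul₀ (fun hc0 => by simp [hc0] at hc) w
  right_inv := fun w => smul_inv_smul₀ (fun hc0 => by simp [hc0] at hc) w
  norm_map' := fun w => by simp [norm_smul, hc]

lemma map_rotIso {n : ℕ} {μ : Measure (EuclideanSpace ℂ (Fin n))} (hrad : IsRadial μ)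
    (c : ℂ) (hc : ‖c‖ = 1) : Measure.map (rotIso n c hc) μ = μ := by
  ext E hE
  rw [Measure.map_apply (rotIso n c hc).continuous.measurable hE]
  exact hrad _ E hE

/-- Rotation invariance of integrals against a radial measure. -/
lemma integral_rot_eq {n : ℕ} {μ : Measure (EuclideanSpace ℂ (Fin n))} (hrad : IsRadial μ)
    {G : Type*} [NormedAddCommGroup G] [NormedSpace ℝ G]
    (g : EuclideanSpace ℂ (Fin n) → G) (c : ℂ) (hc : ‖c‖ = 1) :
    ∫ w, g (c • w) ∂μ = ∫ w, g w ∂μ := by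
  have hemb : MeasurableEmbedding (⇑(rotIso n c hc)) :=
    (rotIso n c hc).toHomeomorph.measurableEmbedding
  conv_rhs => rw [← map_rotIso hrad c hc]
  rw [hemb.integral_map]
  rfl

lemma integrable_rot {n : ℕ} {μ : Measure (EuclideanSpace ℂ (Fin n))} (hrad : IsRadial μ)
    {G : Type*} [NormedAddCommGroup G]
    (g : EuclideanSpace ℂ (Fin n) → G) (c : ℂ) (hc : ‖c‖ = 1) (hg : Integrable g μ) :
    Integrable (fun w => g (c • w)) μ := by
  have hemb : MeasurableEmbedding (⇑(rotIso n c hc)) :=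
    (rotIso n c hc).toHomeomorph.measurableEmbedding
  exact (hemb.integrable_map_iff (g := g)).mp (by rwa [map_rotIso hrad c hc])

/-- A measure with finite Gaussian-weighted mass is σ-finite. -/
lemma sigmaFinite_of_decay {n : ℕ} (α : ℝ) (hα : 0 < α)
    (μ : Measure (EuclideanSpace ℂ (Fin n)))
    (hfin : (∫⁻ w, ENNReal.ofReal (Real.exp (-‖w‖ ^ 2 / α)) ∂μ) < ⊤) : SigmaFinite μ := by
  refine ⟨⟨⟨fun k => Metric.ball 0 k, fun _ => trivial, fun k => ?_, Metric.iUnion_ball_nat 0⟩⟩⟩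
  have hle : ENNReal.ofReal (Real.exp (-(k:ℝ) ^ 2 / α)) * μ (Metric.ball 0 k)
      ≤ ∫⁻ w, ENNReal.ofReal (Real.exp (-‖w‖ ^ 2 / α)) ∂μ := by
    rw [← setLIntegral_const (Metric.ball (0 : EuclideanSpace ℂ (Fin n)) k)
      (ENNReal.ofReal (Real.exp (-(k:ℝ) ^ 2 / α)))]
    calc ∫⁻ w in Metric.ball 0 k, ENNReal.ofReal (Real.exp (-(k:ℝ) ^ 2 / α)) ∂μ
        ≤ ∫⁻ w in Metric.ball 0 k, ENNReal.ofReal (Real.exp (-‖w‖ ^ 2 / α)) ∂μ := by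
          refine setLIntegral_mono (by fun_prop) fun w hw => ?_
          refine ENNReal.ofReal_le_ofReal (Real.exp_le_exp.mpr ?_)
          rw [div_le_div_iff_of_pos_right hα, neg_le_neg_iff]
          have : ‖w‖ < k := by simpa [Metric.mem_ball] using hw
          have h0 : (0:ℝ) ≤ ‖w‖ := norm_nonneg _
          nlinarith
      _ ≤ ∫⁻ w, ENNReal.ofReal (Real.exp (-‖w‖ ^ 2 / α)) ∂μ := setLIntegral_le_lintegral _ _
  by_contra htop
  rw [not_lt, top_le_iff] at htop
  rw [htop, ENNReal.mul_top (by positivity)] at hle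
  exact absurd (top_le_iff.mp hle) (by simp [hfin.ne])

/-- The average of an entire function over the unit circle vanishes if its value
at the center vanishes. -/
lemma circle_avg_zero {F : ℂ → ℂ} (hF : Differentiable ℂ F) (hF0 : F 0 = 0) :
    (∫ θ in (0:ℝ)..(2*Real.pi), F (Complex.exp (θ * Complex.I))) = 0 := by
  have key := (hF.diffContOnCl (s := Metric.ball (0:ℂ) 1)).circleIntegral_sub_inv_smul
    (Metric.mem_ball_self one_pos)
  rw [hF0, smul_zero] at key
  have hmap : ∀ θ : ℝ, circleMap 0 1 θ = Complex.exp (θ * Complex.I) := by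
    intro θ; simp [circleMap]
  have : (∮ zz in C(0, 1), (zz - 0)⁻¹ • F zz)
      = Complex.I * ∫ θ in (0:ℝ)..(2*Real.pi), F (Complex.exp (θ * Complex.I)) := by
    rw [circleIntegral, ← intervalIntegral.integral_const_mul]
    refine intervalIntegral.integral_congr fun θ _ => ?_
    have hne : circleMap 0 1 θ ≠ 0 := circleMap_ne_center one_ne_zero
    rw [deriv_circleMap]
    simp only [smul_eq_mul, sub_zero, hmap]
    rw [← hmap θ]
    field_simp
  rw [this] at key
  exact (mul_eq_zero.mp key).resolve_left Complex.I_ne_zero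

/-- Let `μ` be a radial positive Borel measure on `ℂⁿ` with
`∫ e^{-|w|²/α} dμ(w) < ∞`, let `h : ℂⁿ → ℂ` be entire with `h(0) = 0`, and let `z ∈ ℂⁿ` be
such that `∫ |exp(⟨z,w⟩/α) conj(h(w))| e^{-|w|²/α} dμ(w) < ∞`. Then
`∫ exp(⟨z,w⟩/α) conj(h(w)) e^{-|w|²/α} dμ(w) = 0`. -/
theorem radialMeasureOrthogonality (n : ℕ) (hn : 0 < n) (α : ℝ) (hα : 0 < α)
    (μ : Measure (EuclideanSpace ℂ (Fin n))) (hrad : IsRadial μ)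
    (hfin : (∫⁻ w, ENNReal.ofReal (Real.exp (-‖w‖ ^ 2 / α)) ∂μ) < ⊤)
    (h : EuclideanSpace ℂ (Fin n) → ℂ) (hent : Differentiable ℂ h) (h0 : h 0 = 0)
    (z : EuclideanSpace ℂ (Fin n))
    (hint : (∫⁻ w, ENNReal.ofReal
        (‖Complex.exp ((∑ j, z j * (starRingEnd ℂ) (w j)) / (α : ℂ)) *
            (starRingEnd ℂ) (h w)‖ * Real.exp (-‖w‖ ^ 2 / α)) ∂μ) < ⊤) :
    (∫ w, Complex.exp ((∑ j, z j * (starRingEnd ℂ) (w j)) / (α : ℂ)) *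
        (starRingEnd ℂ) (h w) * (Real.exp (-‖w‖ ^ 2 / α) : ℂ) ∂μ) = 0 := by
  have hsf : SigmaFinite μ := sigmaFinite_of_decay α hα μ hfin
  set f : EuclideanSpace ℂ (Fin n) → ℂ := fun w =>
    Complex.exp ((∑ j, z j * (starRingEnd ℂ) (w j)) / (α : ℂ)) *
      (starRingEnd ℂ) (h w) * (Real.exp (-‖w‖ ^ 2 / α) : ℂ) with hfdef
  -- continuity of f
  have hsum : Continuous fun w : EuclideanSpace ℂ (Fin n) =>
      (∑ j, z j * (starRingEnd ℂ) (w j)) := by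
    refine continuous_finset_sum _ fun j _ => continuous_const.mul ?_
    exact Complex.continuous_conj.comp ((continuous_apply j).comp (PiLp.continuous_ofLp 2 _))
  have hcf : Continuous f := by
    refine ((Complex.continuous_exp.comp (hsum.div_const _)).mul
      (Complex.continuous_conj.comp (hent.continuous))).mul ?_
    exact Complex.continuous_ofReal.comp (Real.continuous_exp.comp (by fun_prop))
  -- integrability of f
  have hIf : Integrable f μ := by
    refine ⟨hcf.aestronglyMeasurable, ?_⟩
    rw [hasFiniteIntegral_iff_norm]
    have : ∀ w : EuclideanSpace ℂ (Fin n), ‖f w‖ =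
        ‖Complex.exp ((∑ j, z j * (starRingEnd ℂ) (w j)) / (α : ℂ)) *
          (starRingEnd ℂ) (h w)‖ * Real.exp (-‖w‖ ^ 2 / α) := by
      intro w
      rw [hfdef]
      simp only [norm_mul, Complex.norm_real, Real.norm_eq_abs,
        abs_of_pos (Real.exp_pos _)]
    simp only [this]
    exact hint
  -- unimodularity of the rotations
  have hc1 : ∀ θ : ℝ, ‖Complex.exp (θ * Complex.I)‖ = 1 := fun θ => by
    simp [Complex.norm_exp_ofReal_mul_I]
  set g : ℝ → EuclideanSpace ℂ (Fin n) → ℂ :=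
    fun θ w => f (Complex.exp (θ * Complex.I) • w) with hgdef
  have key1 : ∀ θ : ℝ, ∫ w, g θ w ∂μ = ∫ w, f w ∂μ :=
    fun θ => integral_rot_eq hrad f _ (hc1 θ)
  have key2 : ∀ θ : ℝ, Integrable (g θ) μ :=
    fun θ => integrable_rot hrad f _ (hc1 θ) hIf
  have key3 : ∀ θ : ℝ, ∫ w, ‖g θ w‖ ∂μ = ∫ w, ‖f w‖ ∂μ :=
    fun θ => integral_rot_eq hrad (fun w => ‖f w‖) _ (hc1 θ)
  set ν : Measure ℝ := volume.restrict (Set.Ioc (0:ℝ) (2*Real.pi)) with hνdef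
  have hνfin : IsFiniteMeasure ν := by
    constructor
    rw [hνdef, Measure.restrict_apply_univ]
    exact measure_Ioc_lt_top
  -- Fubini
  have hprod : Integrable (Function.uncurry g) (ν.prod μ) := by
    have hmeas : AEStronglyMeasurable (Function.uncurry g) (ν.prod μ) := by
      refine Continuous.aestronglyMeasurable ?_
      have : Continuous fun p : ℝ × EuclideanSpace ℂ (Fin n) =>
          Complex.exp ((p.1 : ℂ) * Complex.I) • p.2 := by fun_prop
      exact hcf.comp this
    rw [integrable_prod_iff hmeas]
    constructor
    · exact Filter.Eventually.of_forall fun θ => key2 θ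
    · have : (fun θ : ℝ => ∫ w, ‖Function.uncurry g (θ, w)‖ ∂μ)
          = fun _ : ℝ => ∫ w, ‖f w‖ ∂μ := funext fun θ => key3 θ
      rw [this]
      exact integrable_const _
  have hswap := integral_integral_swap hprod
  -- the inner integral over θ vanishes for every w
  have hinner : ∀ w : EuclideanSpace ℂ (Fin n), (∫ θ, g θ w ∂ν) = 0 := by
    intro w
    set a : ℂ := ∑ j, z j * (starRingEnd ℂ) (w j) with hadef
    set F : ℂ → ℂ := fun lam => Complex.exp ((starRingEnd ℂ) (a / (α:ℂ)) * lam) * h (lam • w)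
      with hFdef
    have hFd : Differentiable ℂ F := by
      have h1 : Differentiable ℂ fun lam : ℂ => (starRingEnd ℂ) (a / (α:ℂ)) * lam :=
        differentiable_id.const_mul _
    -- exp part
      have h2 := Complex.differentiable_exp.comp h1
      have h3 : Differentiable ℂ fun lam : ℂ => h (lam • w) :=
        hent.comp (differentiable_id.smul_const w)
      exact h2.mul h3
    have hF0 : F 0 = 0 := by simp [hFdef, h0]
    have havg := circle_avg_zero hFd hF0
    -- pointwise identity
    have hpt : ∀ θ : ℝ, g θ w
        = (Real.exp (-‖w‖ ^ 2 / α) : ℂ) * (starRingEnd ℂ) (F (Complex.exp (θ * Complex.I))) := by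
      intro θ
      set c : ℂ := Complex.exp (θ * Complex.I) with hcdef
      have hnorm : ‖c • w‖ = ‖w‖ := by rw [norm_smul, hc1 θ, one_mul]
      have hsum' : (∑ j, z j * (starRingEnd ℂ) ((c • w) j)) = (starRingEnd ℂ) c * a := by
        rw [hadef, Finset.mul_sum]
        simp only [PiLp.smul_apply, smul_eq_mul, map_mul]
        exact Finset.sum_congr rfl fun j _ => by ring
      have hexp : Complex.exp (((starRingEnd ℂ) c * a) / (α:ℂ))
          = (starRingEnd ℂ) (Complex.exp ((starRingEnd ℂ) (a / (α:ℂ)) * c)) := by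
        have h1 : (starRingEnd ℂ) (Complex.exp ((starRingEnd ℂ) (a / (α:ℂ)) * c))
            = Complex.exp ((a / (α:ℂ)) * (starRingEnd ℂ) c) := by
          rw [← Complex.exp_conj, map_mul, Complex.conj_conj]
        rw [h1]
        congr 1
        ring
      rw [hgdef, hfdef]
      simp only [← hcdef, hsum', hnorm, hexp, hFdef, map_mul]
      ring
    calc (∫ θ, g θ w ∂ν)
        = ∫ θ, (Real.exp (-‖w‖ ^ 2 / α) : ℂ) *
            (starRingEnd ℂ) (F (Complex.exp (θ * Complex.I))) ∂ν := by
          exact integral_congr_ae (Filter.Eventually.of_forall fun θ => hpt θ)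
      _ = (Real.exp (-‖w‖ ^ 2 / α) : ℂ) *
            ∫ θ, (starRingEnd ℂ) (F (Complex.exp (θ * Complex.I))) ∂ν :=
          integral_const_mul _ _
      _ = (Real.exp (-‖w‖ ^ 2 / α) : ℂ) *
            (starRingEnd ℂ) (∫ θ, F (Complex.exp (θ * Complex.I)) ∂ν) := by
          rw [integral_conj]
      _ = 0 := by
          have : (∫ θ, F (Complex.exp (θ * Complex.I)) ∂ν) = 0 := by
            rw [hνdef, ← intervalIntegral.integral_of_le Real.two_pi_pos.le]
            exact havg
          rw [this, map_zero, mul_zero]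
  -- put everything together
  have hLHS : (∫ θ, ∫ w, g θ w ∂μ ∂ν) = (2 * Real.pi) • ∫ w, f w ∂μ := by
    have : (fun θ : ℝ => ∫ w, g θ w ∂μ) = fun _ : ℝ => ∫ w, f w ∂μ := funext key1
    rw [this, integral_const]
    congr 1
    rw [hνdef, measureReal_def, Measure.restrict_apply_univ, Real.volume_Ioc]
    rw [ENNReal.toReal_ofReal (by linarith [Real.pi_pos])]
    ring
  have hRHS : (∫ w, ∫ θ, g θ w ∂ν ∂μ) = 0 := by
    have : (fun w => ∫ θ, g θ w ∂ν) = fun _ => (0:ℂ) := funext hinner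
    rw [this, integral_const, smul_zero]
  rw [hLHS, hRHS] at hswap
  have h2π : (2 * Real.pi) ≠ 0 := ne_of_gt Real.two_pi_pos
  have := (smul_eq_zero.mp hswap).resolve_left h2π
  exact this
end
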